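/- In the Cantor system (X,f) of the construction, the point p = (v_{0,0}, v_{1,0}, v_{2,0}, …) is the only fixed point of f, and moreover p is the only periodic point of f (i.e., if f^k(x) = x for some k ≥ 1 then x = p). -/

import Mathlib

open Filter Topology
open scoped ENNReal

/-- `φ` is a graph homomorphism from `(V₁,E₁)` to `(V₂,E₂)`. -/
def IsGraphHom {V₁ V₂ : Type*} (E₁ : V₁ → V₁ → Prop) (E₂ : V₂ → V₂ → Prop)
    (φ : V₁ → V₂) : Prop :=
  ∀ u v, E₁ u v → E₂ (φ u) (φ v)

/-- `φ` is edge surjective. -/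
def IsEdgeSurj {V₁ V₂ : Type*} (E₁ : V₁ → V₁ → Prop) (E₂ : V₂ → V₂ → Prop)
    (φ : V₁ → V₂) : Prop :=
  ∀ u v, E₂ u v → ∃ u' v', E₁ u' v' ∧ φ u' = u ∧ φ v' = v

/-- `φ` is +directional. -/
def IsPlusDirectional {V₁ V₂ : Type*} (E₁ : V₁ → V₁ → Prop) (φ : V₁ → V₂) : Prop :=
  ∀ u v v', E₁ u v → E₁ u v' → φ v = φ v'

/-- `φ` is bidirectional. -/
def IsBidirectional {V₁ V₂ : Type*} (E₁ : V₁ → V₁ → Prop) (φ : V₁ → V₂) : Prop :=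
  IsPlusDirectional E₁ φ ∧ ∀ u u' v, E₁ u v → E₁ u' v → φ u = φ u'

/-- `φ` is a cover: a +directional edge-surjective graph homomorphism. -/
def IsCover {V₁ V₂ : Type*} (E₁ : V₁ → V₁ → Prop) (E₂ : V₂ → V₂ → Prop)
    (φ : V₁ → V₂) : Prop :=
  IsGraphHom E₁ E₂ φ ∧ IsPlusDirectional E₁ φ ∧ IsEdgeSurj E₁ E₂ φ

/-- every vertex has an incoming and an outgoing edge. -/
def IsSurjDigraph {V : Type*} (E : V → V → Prop) : Prop :=
  (∀ v, ∃ u, E u v) ∧ ∀ u, ∃ v, E u v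

/-- the inverse limit `V_𝒢` of a sequence of graph maps. -/
abbrev InvLim (V : ℕ → Type*) (φ : ∀ n, V (n + 1) → V n) : Type _ :=
  { x : ∀ n, V n // ∀ n, φ n (x (n + 1)) = x n }

/-- the relation `E_𝒢` on `V_𝒢`. -/
def ERel {V : ℕ → Type*} (E : ∀ n, V n → V n → Prop) (φ : ∀ n, V (n + 1) → V n)
    (x y : InvLim V φ) : Prop :=
  ∀ n, E n (x.1 n) (y.1 n)

/-- the product-of-discrete topology on the inverse limit, given explicitly. -/
def invLimTop (V : ℕ → Type*) (φ : ∀ n, V (n + 1) → V n) :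
    TopologicalSpace (InvLim V φ) :=
  @instTopologicalSpaceSubtype _ _ (@Pi.topologicalSpace ℕ V fun _ => ⊥)

/-- the distance function of an explicitly given metric space structure. -/
noncomputable def mdist {X : Type*} (m : MetricSpace X) (x y : X) : ℝ :=
  @dist X m.toDist x y

/-- the topology induced by an explicitly given metric space structure. -/
def mtop {X : Type*} (m : MetricSpace X) : TopologicalSpace X :=
  @UniformSpace.toTopologicalSpace X m.toUniformSpace

/-- the (half-open) list of vertices `vtx i 0, vtx i 1, …, vtx i (len-1)` of
the circuit `c_{n,i}`, the final vertex (equal to the initial one) omitted. -/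
def circList {Vn : Type*} (vtx : ℕ → ℕ → Vn) (i len : ℕ) : List Vn :=
  List.ofFn fun j : Fin len => vtx i (j : ℕ)


section Aux
variable {V : ℕ → Type}
  (E : ∀ n, V n → V n → Prop) (φ : ∀ n, V (n + 1) → V n)
  (len : ℕ → ℕ → ℕ) (v0 : ∀ n, V n) (vtx : ∀ n, ℕ → ℕ → V n)

lemma detFwd
    (hends : ∀ n i, 1 ≤ i → i ≤ n → vtx n i 0 = v0 n ∧ vtx n i (len n i) = v0 n)
    (hne : ∀ n i j, 1 ≤ i → i ≤ n → 0 < j → j < len n i → vtx n i j ≠ v0 n)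
    (hinj : ∀ n i j i' j', 1 ≤ i → i ≤ n → 1 ≤ i' → i' ≤ n →
      0 < j → j < len n i → 0 < j' → j' < len n i' →
      vtx n i j = vtx n i' j' → i = i' ∧ j = j')
    (hE : ∀ n, 1 ≤ n → ∀ u v : V n, E n u v ↔
      (u = v0 n ∧ v = v0 n) ∨
      ∃ i j, 1 ≤ i ∧ i ≤ n ∧ j < len n i ∧ u = vtx n i j ∧ v = vtx n i (j + 1))
    {n i j : ℕ} (hi1 : 1 ≤ i) (hin : i ≤ n) (hj0 : 0 < j) (hjl : j < len n i)
    {v : V n} (hEv : E n (vtx n i j) v) : v = vtx n i (j + 1) := by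
  have hn1 : 1 ≤ n := le_trans hi1 hin
  rcases (hE n hn1 _ _).1 hEv with ⟨h1, _⟩ | ⟨i', j', hi'1, hi'n, hj'l, hu, hv⟩
  · exact absurd h1 (hne n i j hi1 hin hj0 hjl)
  · rcases Nat.eq_zero_or_pos j' with rfl | hj'0
    · rw [(hends n i' hi'1 hi'n).1] at hu
      exact absurd hu (hne n i j hi1 hin hj0 hjl)
    · obtain ⟨rfl, rfl⟩ := hinj n i j i' j' hi1 hin hi'1 hi'n hj0 hjl hj'0 hj'l hu
      exact hv

lemma detBwd
    (hends : ∀ n i, 1 ≤ i → i ≤ n → vtx n i 0 = v0 n ∧ vtx n i (len n i) = v0 n)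
    (hne : ∀ n i j, 1 ≤ i → i ≤ n → 0 < j → j < len n i → vtx n i j ≠ v0 n)
    (hinj : ∀ n i j i' j', 1 ≤ i → i ≤ n → 1 ≤ i' → i' ≤ n →
      0 < j → j < len n i → 0 < j' → j' < len n i' →
      vtx n i j = vtx n i' j' → i = i' ∧ j = j')
    (hE : ∀ n, 1 ≤ n → ∀ u v : V n, E n u v ↔
      (u = v0 n ∧ v = v0 n) ∨
      ∃ i j, 1 ≤ i ∧ i ≤ n ∧ j < len n i ∧ u = vtx n i j ∧ v = vtx n i (j + 1))
    {n i j : ℕ} (hi1 : 1 ≤ i) (hin : i ≤ n) (hj0 : 0 < j) (hjl : j < len n i)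
    {u : V n} (hEu : E n u (vtx n i j)) : u = vtx n i (j - 1) := by
  have hn1 : 1 ≤ n := le_trans hi1 hin
  rcases (hE n hn1 _ _).1 hEu with ⟨_, h2⟩ | ⟨i', j', hi'1, hi'n, hj'l, hu, hv⟩
  · exact absurd h2 (hne n i j hi1 hin hj0 hjl)
  · rcases eq_or_lt_of_le (Nat.succ_le_of_lt hj'l) with heq | hlt
    · have hv0 : vtx n i' (j' + 1) = v0 n := by
        rw [show j' + 1 = len n i' from heq, (hends n i' hi'1 hi'n).2]
      rw [hv0] at hv
      exact absurd hv (hne n i j hi1 hin hj0 hjl)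
    · obtain ⟨rfl, hjj⟩ := hinj n i j i' (j' + 1) hi1 hin hi'1 hi'n hj0 hjl (Nat.succ_pos _) hlt hv
      rw [hu, show j - 1 = j' by omega]

lemma walkFwd
    (hends : ∀ n i, 1 ≤ i → i ≤ n → vtx n i 0 = v0 n ∧ vtx n i (len n i) = v0 n)
    (hne : ∀ n i j, 1 ≤ i → i ≤ n → 0 < j → j < len n i → vtx n i j ≠ v0 n)
    (hinj : ∀ n i j i' j', 1 ≤ i → i ≤ n → 1 ≤ i' → i' ≤ n →
      0 < j → j < len n i → 0 < j' → j' < len n i' →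
      vtx n i j = vtx n i' j' → i = i' ∧ j = j')
    (hE : ∀ n, 1 ≤ n → ∀ u v : V n, E n u v ↔
      (u = v0 n ∧ v = v0 n) ∨
      ∃ i j, 1 ≤ i ∧ i ≤ n ∧ j < len n i ∧ u = vtx n i j ∧ v = vtx n i (j + 1))
    {n : ℕ} (u : ℕ → V n) (hu : ∀ m, E n (u m) (u (m + 1)))
    {m₀ i j : ℕ} (hi1 : 1 ≤ i) (hin : i ≤ n) (hj0 : 0 < j)
    (h0 : u m₀ = vtx n i j) :
    ∀ d, j + d ≤ len n i → u (m₀ + d) = vtx n i (j + d) := by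
  intro d
  induction d with
  | zero => intro _; simpa using h0
  | succ d ih =>
    intro hd
    have hd' : j + d < len n i := by omega
    have h1 := ih (le_of_lt hd')
    have he : E n (u (m₀ + d)) (u (m₀ + d + 1)) := hu _
    rw [h1] at he
    exact detFwd E len v0 vtx hends hne hinj hE hi1 hin (by omega) hd' he

lemma walkBwd
    (hends : ∀ n i, 1 ≤ i → i ≤ n → vtx n i 0 = v0 n ∧ vtx n i (len n i) = v0 n)
    (hne : ∀ n i j, 1 ≤ i → i ≤ n → 0 < j → j < len n i → vtx n i j ≠ v0 n)
    (hinj : ∀ n i j i' j', 1 ≤ i → i ≤ n → 1 ≤ i' → i' ≤ n →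
      0 < j → j < len n i → 0 < j' → j' < len n i' →
      vtx n i j = vtx n i' j' → i = i' ∧ j = j')
    (hE : ∀ n, 1 ≤ n → ∀ u v : V n, E n u v ↔
      (u = v0 n ∧ v = v0 n) ∨
      ∃ i j, 1 ≤ i ∧ i ≤ n ∧ j < len n i ∧ u = vtx n i j ∧ v = vtx n i (j + 1))
    {n : ℕ} (u : ℕ → V n) (hu : ∀ m, E n (u m) (u (m + 1)))
    {m₀ i j : ℕ} (hi1 : 1 ≤ i) (hin : i ≤ n) (hjl : j < len n i)
    (h0 : u m₀ = vtx n i j) :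
    ∀ d, d ≤ j → d ≤ m₀ → u (m₀ - d) = vtx n i (j - d) := by
  intro d
  induction d with
  | zero => intro _ _; simpa using h0
  | succ d ih =>
    intro hdj hdm
    have h1 := ih (by omega) (by omega)
    have he : E n (u (m₀ - d - 1)) (u (m₀ - d - 1 + 1)) := hu _
    have e0 : m₀ - d - 1 + 1 = m₀ - d := by omega
    rw [e0, h1] at he
    have h2 := detBwd E len v0 vtx hends hne hinj hE hi1 hin
      (show 0 < j - d by omega) (show j - d < len n i by omega) he
    have e1 : m₀ - (d + 1) = m₀ - d - 1 := by omega
    have e2 : j - (d + 1) = j - d - 1 := by omega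
    rw [e1, e2]
    exact h2

lemma circLong
    (hends : ∀ n i, 1 ≤ i → i ≤ n → vtx n i 0 = v0 n ∧ vtx n i (len n i) = v0 n)
    (hne : ∀ n i j, 1 ≤ i → i ≤ n → 0 < j → j < len n i → vtx n i j ≠ v0 n)
    (hinj : ∀ n i j i' j', 1 ≤ i → i ≤ n → 1 ≤ i' → i' ≤ n →
      0 < j → j < len n i → 0 < j' → j' < len n i' →
      vtx n i j = vtx n i' j' → i = i' ∧ j = j')
    (hE : ∀ n, 1 ≤ n → ∀ u v : V n, E n u v ↔
      (u = v0 n ∧ v = v0 n) ∨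
      ∃ i j, 1 ≤ i ∧ i ≤ n ∧ j < len n i ∧ u = vtx n i j ∧ v = vtx n i (j + 1))
    {n : ℕ} (u : ℕ → V n) (hu : ∀ m, E n (u m) (u (m + 1)))
    {k : ℕ} (hk : 1 ≤ k) (hper : ∀ m, u (m + k) = u m)
    {i j : ℕ} (hi1 : 1 ≤ i) (hin : i ≤ n) (hj0 : 0 < j) (hjl : j < len n i)
    (h0 : u 0 = vtx n i j) : len n i ≤ k := by
  by_contra hL
  push_neg at hL
  have hk0 : u k = vtx n i j := by
    have := hper 0
    rw [Nat.zero_add] at this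
    rw [this, h0]
  by_cases hcase : j + k ≤ len n i
  · have hfk := walkFwd E len v0 vtx hends hne hinj hE u hu hi1 hin hj0 h0 k hcase
    rw [Nat.zero_add, hk0] at hfk
    rcases eq_or_lt_of_le hcase with heq | hlt
    · rw [heq, (hends n i hi1 hin).2] at hfk
      exact absurd hfk (hne n i j hi1 hin hj0 hjl)
    · have := (hinj n i j i (j + k) hi1 hin hi1 hin hj0 hjl (by omega) hlt hfk).2
      omega
  · by_cases hkj : k ≤ j
    · have hb := walkBwd E len v0 vtx hends hne hinj hE u hu hi1 hin hjl hk0 k hkj le_rfl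
      rw [Nat.sub_self, h0] at hb
      rcases eq_or_lt_of_le hkj with heq | hlt
      · rw [show j - k = 0 by omega, (hends n i hi1 hin).1] at hb
        exact absurd hb (hne n i j hi1 hin hj0 hjl)
      · have := (hinj n i j i (j - k) hi1 hin hi1 hin hj0 hjl (by omega) (by omega) hb).2
        omega
    · -- j < k
      have hb := walkBwd E len v0 vtx hends hne hinj hE u hu hi1 hin hjl hk0 j le_rfl (by omega)
      rw [Nat.sub_self, (hends n i hi1 hin).1] at hb
      have hf := walkFwd E len v0 vtx hends hne hinj hE u hu hi1 hin hj0 h0 (k - j) (by omega)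
      rw [Nat.zero_add, show j + (k - j) = k by omega] at hf
      rw [hb] at hf
      exact absurd hf.symm (hne n i k hi1 hin (by omega) (by omega))

lemma lenLB
    (hlen2 : ∀ n i, 1 ≤ i → i ≤ n → 2 ≤ len n i)
    (hrec : ∀ n i, 1 ≤ i → i ≤ n →
      len (n + 1) i = 2 + 2 * ∑ j ∈ Finset.Icc i n, len n j) :
    ∀ n i, 1 ≤ i → i ≤ n → 2 + 4 * (n + 1 - i) ≤ len (n + 1) i := by
  intro n i hi1 hin
  rw [hrec n i hi1 hin]
  have hsum : 2 * (n + 1 - i) ≤ ∑ j ∈ Finset.Icc i n, len n j := by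
    calc 2 * (n + 1 - i) = ∑ _j ∈ Finset.Icc i n, 2 := by
          rw [Finset.sum_const, Nat.card_Icc, smul_eq_mul, Nat.mul_comm]
      _ ≤ ∑ j ∈ Finset.Icc i n, len n j := by
          apply Finset.sum_le_sum
          intro j hj
          rcases Finset.mem_Icc.1 hj with ⟨h1, h2⟩
          exact hlen2 n j (le_trans hi1 h1) h2
  omega

lemma phiClass
    (hends : ∀ n i, 1 ≤ i → i ≤ n → vtx n i 0 = v0 n ∧ vtx n i (len n i) = v0 n)
    (hphiwalk : ∀ n i, 1 ≤ i → i ≤ n →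
      List.map (φ n) (circList (vtx (n + 1)) i (len (n + 1) i)) =
        v0 n :: (((List.range' i (n + 1 - i)).flatMap fun k =>
          circList (vtx n) k (len n k) ++ circList (vtx n) k (len n k)) ++ [v0 n]))
    {n i s : ℕ} (hi1 : 1 ≤ i) (hin : i ≤ n) (hs : s < len (n + 1) i) :
    φ n (vtx (n + 1) i s) = v0 n ∨
      ∃ j t, i ≤ j ∧ j ≤ n ∧ 0 < t ∧ t < len n j ∧
        φ n (vtx (n + 1) i s) = vtx n j t := by
  have hmem : φ n (vtx (n + 1) i s) ∈
      List.map (φ n) (circList (vtx (n + 1)) i (len (n + 1) i)) := by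
    apply List.mem_map_of_mem
    simp only [circList, List.mem_ofFn]
    exact ⟨⟨s, hs⟩, rfl⟩
  rw [hphiwalk n i hi1 hin] at hmem
  rcases List.mem_cons.1 hmem with h | hmem'
  · exact Or.inl h
  rcases List.mem_append.1 hmem' with hmem2 | h2
  · rcases List.mem_flatMap.1 hmem2 with ⟨kk, hkkmem, hmemc⟩
    rcases List.mem_range'_1.1 hkkmem with ⟨hkk1, hkk2⟩
    have hkkn : kk ≤ n := by omega
    have hkey : ∃ t : Fin (len n kk), vtx n kk (t : ℕ) = φ n (vtx (n + 1) i s) := by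
      rcases List.mem_append.1 hmemc with hc | hc
      · rcases List.mem_ofFn.1 hc with ⟨t, ht⟩
        exact ⟨t, ht⟩
      · rcases List.mem_ofFn.1 hc with ⟨t, ht⟩
        exact ⟨t, ht⟩
    rcases hkey with ⟨t, ht⟩
    rcases Nat.eq_zero_or_pos (t : ℕ) with h0 | hpos
    · left
      rw [← ht, h0, (hends n kk (le_trans hi1 hkk1) hkkn).1]
    · exact Or.inr ⟨kk, t, hkk1, hkkn, hpos, t.2, ht.symm⟩
  · rw [List.mem_singleton.1 h2]
    exact Or.inl rfl
end Aux

theorem stmt8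
    (V : ℕ → Type) [∀ n, TopologicalSpace (V n)] [∀ n, DiscreteTopology (V n)]
    [∀ n, Fintype (V n)]
    (E : ∀ n, V n → V n → Prop) (φ : ∀ n, V (n + 1) → V n)
    (len : ℕ → ℕ → ℕ) (v0 : ∀ n, V n) (vtx : ∀ n, ℕ → ℕ → V n)
    (hV0 : ∀ u : V 0, u = v0 0)
    (hE0 : ∀ u v : V 0, E 0 u v ↔ u = v0 0 ∧ v = v0 0)
    (hends : ∀ n i, 1 ≤ i → i ≤ n → vtx n i 0 = v0 n ∧ vtx n i (len n i) = v0 n)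
    (hlen2 : ∀ n i, 1 ≤ i → i ≤ n → 2 ≤ len n i)
    (hrec : ∀ n i, 1 ≤ i → i ≤ n →
      len (n + 1) i = 2 + 2 * ∑ j ∈ Finset.Icc i n, len n j)
    (hne : ∀ n i j, 1 ≤ i → i ≤ n → 0 < j → j < len n i → vtx n i j ≠ v0 n)
    (hinj : ∀ n i j i' j', 1 ≤ i → i ≤ n → 1 ≤ i' → i' ≤ n →
      0 < j → j < len n i → 0 < j' → j' < len n i' →
      vtx n i j = vtx n i' j' → i = i' ∧ j = j')
    (hall : ∀ n, 1 ≤ n → ∀ u : V n,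
      u = v0 n ∨ ∃ i j, 1 ≤ i ∧ i ≤ n ∧ 0 < j ∧ j < len n i ∧ u = vtx n i j)
    (hE : ∀ n, 1 ≤ n → ∀ u v : V n, E n u v ↔
      (u = v0 n ∧ v = v0 n) ∨
      ∃ i j, 1 ≤ i ∧ i ≤ n ∧ j < len n i ∧ u = vtx n i j ∧ v = vtx n i (j + 1))
    (hphi0 : ∀ n, φ n (v0 (n + 1)) = v0 n)
    (hphitop : ∀ n j, j ≤ len (n + 1) (n + 1) → φ n (vtx (n + 1) (n + 1) j) = v0 n)
    (hphiwalk : ∀ n i, 1 ≤ i → i ≤ n →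
      List.map (φ n) (circList (vtx (n + 1)) i (len (n + 1) i)) =
        v0 n :: (((List.range' i (n + 1 - i)).flatMap fun k =>
          circList (vtx n) k (len n k) ++ circList (vtx n) k (len n k)) ++ [v0 n]))
    (hcov : ∀ n, IsCover (E (n + 1)) (E n) (φ n))
    (f : InvLim V φ ≃ₜ InvLim V φ)
    (hf : ∀ x y : InvLim V φ, ERel E φ x y ↔ f x = y)
    (m : MetricSpace (InvLim V φ))
    (hm : mtop m = (inferInstance : TopologicalSpace (InvLim V φ)))
    (p : InvLim V φ) (hp : ∀ n, p.1 n = v0 n) :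
    f p = p ∧ (∀ x : InvLim V φ, f x = x → x = p) ∧
      ∀ (x : InvLim V φ) (k : ℕ), 1 ≤ k → (⇑f)^[k] x = x → x = p := by
  have hEloop : ∀ n, E n (v0 n) (v0 n) := by
    intro n
    cases n with
    | zero => exact (hE0 _ _).2 ⟨rfl, rfl⟩
    | succ n =>
      exact (hE (n + 1) (Nat.succ_le_succ (Nat.zero_le n)) _ _).2 (Or.inl ⟨rfl, rfl⟩)
  have hfp : f p = p := by
    rw [← hf]
    intro n
    rw [hp n]
    exact hEloop n
  have hperiodic : ∀ (x : InvLim V φ) (k : ℕ), 1 ≤ k → (⇑f)^[k] x = x → x = p := by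
    intro x k hk hx
    have hy : ∀ n m, E n (((⇑f)^[m] x).1 n) (((⇑f)^[m + 1] x).1 n) := by
      intro n m
      have hstep : f ((⇑f)^[m] x) = (⇑f)^[m + 1] x :=
        (Function.iterate_succ_apply' (⇑f) m x).symm
      exact ((hf _ _).2 hstep) n
    have hperiod : ∀ m, (⇑f)^[m + k] x = (⇑f)^[m] x := by
      intro m
      rw [Function.iterate_add_apply, hx]
    have hxall : ∀ n, x.1 n = v0 n := by
      by_contra hcon
      push_neg at hcon
      obtain ⟨n₀, hn₀⟩ := hcon
      have claim : ∀ m, ∃ i j, 1 ≤ i ∧ i ≤ n₀ ∧ 0 < j ∧ j < len (n₀ + m + 1) i ∧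
          x.1 (n₀ + m + 1) = vtx (n₀ + m + 1) i j := by
        intro m
        induction m with
        | zero =>
          have hnz : x.1 (n₀ + 1) ≠ v0 (n₀ + 1) := by
            intro h
            apply hn₀
            rw [← x.2 n₀, h, hphi0]
          rcases hall (n₀ + 1) (by omega) (x.1 (n₀ + 1)) with h |
            ⟨i, j, hi1, hin, hj0, hjl, hxv⟩
          · exact absurd h hnz
          refine ⟨i, j, hi1, ?_, hj0, hjl, hxv⟩
          by_contra hi
          have hieq : i = n₀ + 1 := by omega
          subst hieq
          apply hn₀
          rw [← x.2 n₀, hxv, hphitop n₀ j (le_of_lt hjl)]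
        | succ m ih =>
          obtain ⟨i, j, hi1, hin, hj0, hjl, hxm⟩ := ih
          show ∃ i j, 1 ≤ i ∧ i ≤ n₀ ∧ 0 < j ∧ j < len (n₀ + m + 1 + 1) i ∧
            x.1 (n₀ + m + 1 + 1) = vtx (n₀ + m + 1 + 1) i j
          have hxmne := hne (n₀ + m + 1) i j hi1 (by omega) hj0 hjl
          have hnz : x.1 (n₀ + m + 1 + 1) ≠ v0 (n₀ + m + 1 + 1) := by
            intro h
            have hv : x.1 (n₀ + m + 1) = v0 (n₀ + m + 1) := by
              rw [← x.2 (n₀ + m + 1), h, hphi0]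
            rw [hxm] at hv
            exact hxmne hv
          rcases hall (n₀ + m + 1 + 1) (by omega) (x.1 (n₀ + m + 1 + 1)) with h |
            ⟨i', j', hi'1, hi'n, hj'0, hj'l, hx'⟩
          · exact absurd h hnz
          have hi'N : i' ≤ n₀ + m + 1 := by
            by_contra hc
            have hieq : i' = n₀ + m + 1 + 1 := by omega
            subst hieq
            have hv : x.1 (n₀ + m + 1) = v0 (n₀ + m + 1) := by
              rw [← x.2 (n₀ + m + 1), hx',
                hphitop (n₀ + m + 1) j' (le_of_lt hj'l)]
            rw [hxm] at hv
            exact hxmne hv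
          have himg : φ (n₀ + m + 1) (vtx (n₀ + m + 1 + 1) i' j') = x.1 (n₀ + m + 1) := by
            rw [← hx', x.2 (n₀ + m + 1)]
          rcases phiClass φ len v0 vtx hends hphiwalk hi'1 hi'N hj'l with h |
            ⟨jj, t, hijj, hjjN, ht0, htl, heq⟩
          · rw [himg, hxm] at h
            exact absurd h hxmne
          · rw [himg, hxm] at heq
            obtain ⟨hij, hjt⟩ := hinj (n₀ + m + 1) jj t i j (by omega) hjjN hi1
              (by omega) ht0 htl hj0 hjl heq.symm
            exact ⟨i', j', hi'1, by omega, hj'0, hj'l, hx'⟩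
      obtain ⟨i, j, hi1, hin, hj0, hjl, hxm⟩ := claim k
      have hL := circLong E len v0 vtx hends hne hinj hE
        (fun m => ((⇑f)^[m] x).1 (n₀ + k + 1)) (hy (n₀ + k + 1)) hk
        (fun m => by
          show ((⇑f)^[m + k] x).1 (n₀ + k + 1) = ((⇑f)^[m] x).1 (n₀ + k + 1)
          rw [hperiod m]) hi1 (by omega) hj0 hjl
        (by simpa using hxm)
      have hLB := lenLB len hlen2 hrec (n₀ + k) i hi1 (by omega)
      omega
    apply Subtype.ext
    funext n
    rw [hxall n, hp n]
  refine ⟨hfp, ?_, hperiodic⟩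
  intro x hx
  exact hperiodic x 1 le_rfl (by simpa using hx)
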